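/- (Optimal explainer for different prediction targets.) Let ū and w̄ be square-integrable random vectors in ℝⁿ, let Ω be a fixed real symmetric positive definite n×n matrix, let 1 ≤ k ≤ n, and set S = E[(ū − w̄)(ū − w̄)ᵀ]. Let P ∈ ℝ^{k×n} be any matrix of full row rank k whose row space contains the column space of S. Then the explainer E = P Ω achieves the first best: almost surely, the unique minimizer of f ↦ (f − ū)ᵀ Ω (f − ū) over {f ∈ ℝⁿ : P Ω f = P Ω w̄} is f = w̄. That is, an explainer built from the directions of disagreement between agent and principal (the column space of the second-moment matrix of ū − w̄) fully aligns the agent's choice with the principal's bliss point. -/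

import Mathlib

open MeasureTheory Matrix

lemma aux_mem_range_of_perp_ker {n : ℕ} (S : Matrix (Fin n) (Fin n) ℝ) (hS : Sᵀ = S)
    (v : Fin n → ℝ) (hv : ∀ q : Fin n → ℝ, S *ᵥ q = 0 → q ⬝ᵥ v = 0) :
    ∃ z : Fin n → ℝ, S *ᵥ z = v := by
  by_contra h
  push_neg at h
  have hnmem : v ∉ LinearMap.range S.mulVecLin := by
    simpa [LinearMap.mem_range, Matrix.mulVecLin_apply] using h
  obtain ⟨f, hfv, hfbot⟩ :=
    (LinearMap.range S.mulVecLin).exists_dual_map_eq_bot_of_notMem hnmem inferInstance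
  set q : Fin n → ℝ := fun i => f (Pi.single i 1) with hq
  have hfx : ∀ x : Fin n → ℝ, f x = q ⬝ᵥ x := by
    intro x
    conv_lhs => rw [pi_eq_sum_univ x]
    rw [map_sum]
    have hsingle : ∀ i : Fin n, (fun j => if i = j then (1:ℝ) else 0) = Pi.single i 1 := by
      intro i; ext j; simp [Pi.single_apply, eq_comm]
    simp only [_root_.map_smul, smul_eq_mul, hsingle]
    simp [dotProduct, hq, mul_comm]
  have hker : ∀ z : Fin n → ℝ, f (S *ᵥ z) = 0 := by
    intro z
    have : S *ᵥ z ∈ LinearMap.range S.mulVecLin := ⟨z, rfl⟩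
    have := Submodule.mem_map_of_mem (f := f) this
    rw [hfbot] at this
    simpa using this
  have hq0 : S *ᵥ q = 0 := by
    have h1 : ∀ z : Fin n → ℝ, (S *ᵥ q) ⬝ᵥ z = 0 := by
      intro z
      have := hker z
      rw [hfx] at this
      rwa [Matrix.dotProduct_mulVec, ← Matrix.mulVec_transpose, hS] at this
    have := h1 (S *ᵥ q)
    rwa [dotProduct_self_eq_zero] at this
  exact hfv (by rw [hfx]; exact hv q hq0)


/-- Optimal explainer for different prediction targets: if `P` has full row
rank `k` and its row space contains the column space of `S = E[(ū − w̄)(ū − w̄)ᵀ]`, then the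
explainer `E = P Ω` achieves the first best: almost surely the unique minimizer of
`(f − ū)ᵀ Ω (f − ū)` over `{f : P Ω f = P Ω w̄}` is `f = w̄`. -/
theorem optimal_explainer_for_prediction_targets
    {α : Type*} [MeasurableSpace α] (μ : Measure α) [IsProbabilityMeasure μ]
    (n k : ℕ) (hk1 : 1 ≤ k) (hkn : k ≤ n)
    (ubar wbar : α → Fin n → ℝ)
    (hu : ∀ i, MemLp (fun ω => ubar ω i) 2 μ)
    (hw : ∀ i, MemLp (fun ω => wbar ω i) 2 μ)
    (Ω : Matrix (Fin n) (Fin n) ℝ) (hΩ : Ω.PosDef)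
    (P : Matrix (Fin k) (Fin n) ℝ) (hP : P.rank = k)
    (hrow : ∀ y : Fin n → ℝ,
      (∃ z : Fin n → ℝ,
        (Matrix.of fun i j =>
          ∫ ω, (ubar ω i - wbar ω i) * (ubar ω j - wbar ω j) ∂μ :
          Matrix (Fin n) (Fin n) ℝ) *ᵥ z = y) →
      ∃ c : Fin k → ℝ, Pᵀ *ᵥ c = y) :
    ∀ᵐ ω ∂μ,
      ∀ f : Fin n → ℝ, (P * Ω) *ᵥ f = (P * Ω) *ᵥ wbar ω → f ≠ wbar ω →
        (wbar ω - ubar ω) ⬝ᵥ (Ω *ᵥ (wbar ω - ubar ω))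
          < (f - ubar ω) ⬝ᵥ (Ω *ᵥ (f - ubar ω)) := by
  set D : α → Fin n → ℝ := fun ω i => ubar ω i - wbar ω i with hD
  set S : Matrix (Fin n) (Fin n) ℝ :=
    (Matrix.of fun i j => ∫ ω, (ubar ω i - wbar ω i) * (ubar ω j - wbar ω j) ∂μ) with hSdef
  -- basic facts
  have hDmem : ∀ i, MemLp (fun ω => D ω i) 2 μ := fun i => (hu i).sub (hw i)
  have hInt : ∀ i j, Integrable (fun ω => D ω i * D ω j) μ := by
    intro i j
    rw [← memLp_one_iff_integrable]
    have := (hDmem j).smul (r := 1) (hDmem i)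
    exact this
  have hSsymm : Sᵀ = S := by
    ext i j
    simp only [hSdef, Matrix.transpose_apply, Matrix.of_apply]
    congr 1; ext ω; ring
  -- quadratic form of S is the second moment of q ⬝ᵥ D
  have hSent : ∀ i j, S i j = ∫ ω, D ω i * D ω j ∂μ := fun i j => rfl
  have hQuad : ∀ q : Fin n → ℝ, q ⬝ᵥ (S *ᵥ q) = ∫ ω, (q ⬝ᵥ D ω) ^ 2 ∂μ := by
    intro q
    have hint1 : ∀ i ∈ Finset.univ, ∀ j ∈ Finset.univ,
        Integrable (fun ω => q i * q j * (D ω i * D ω j)) μ :=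
      fun i _ j _ => (hInt i j).const_mul _
    calc q ⬝ᵥ (S *ᵥ q)
        = ∑ i, ∑ j, q i * q j * ∫ ω, D ω i * D ω j ∂μ := by
          simp only [dotProduct, Matrix.mulVec, Finset.mul_sum]
          exact Finset.sum_congr rfl fun i _ => Finset.sum_congr rfl fun j _ => by
            rw [hSent i j]; ring
      _ = ∑ i, ∑ j, ∫ ω, q i * q j * (D ω i * D ω j) ∂μ := by
          exact Finset.sum_congr rfl fun i _ => Finset.sum_congr rfl fun j _ =>
            (integral_const_mul _ _).symm
      _ = ∫ ω, ∑ i, ∑ j, q i * q j * (D ω i * D ω j) ∂μ := by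
          rw [integral_finset_sum]
          · exact Finset.sum_congr rfl fun i _ =>
              (integral_finset_sum _ fun j _ => hint1 i (Finset.mem_univ i) j (Finset.mem_univ j)).symm
          · intro i _
            exact integrable_finset_sum _ fun j _ => hint1 i (Finset.mem_univ i) j (Finset.mem_univ j)
      _ = ∫ ω, (q ⬝ᵥ D ω) ^ 2 ∂μ := by
          congr 1; ext ω
          simp only [dotProduct, sq, Finset.sum_mul_sum]
          exact Finset.sum_congr rfl fun i _ => Finset.sum_congr rfl fun j _ => by ring
  -- a.e. zero for each kernel direction
  have hker_ae : ∀ q : Fin n → ℝ, S *ᵥ q = 0 → ∀ᵐ ω ∂μ, q ⬝ᵥ D ω = 0 := by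
    intro q hq
    have hqD2 : MemLp (fun ω => q ⬝ᵥ D ω) 2 μ := by
      have : (fun ω => q ⬝ᵥ D ω) = fun ω => ∑ i, q i * D ω i := by
        ext ω; simp [dotProduct]
      rw [this]
      have h4 := memLp_finset_sum' (μ := μ) (p := 2) Finset.univ
        (f := fun i ω => q i * D ω i) (fun i _ => (hDmem i).const_mul (q i))
      have h3 : (∑ x : Fin n, fun ω => q x * D ω x) = fun ω => ∑ i, q i * D ω i := by
        ext ω; simp
      rwa [h3] at h4
    have hint : Integrable (fun ω => (q ⬝ᵥ D ω) ^ 2) μ := hqD2.integrable_sq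
    have hzero : ∫ ω, (q ⬝ᵥ D ω) ^ 2 ∂μ = 0 := by
      rw [← hQuad q, hq]; simp
    have := (integral_eq_zero_iff_of_nonneg (fun ω => sq_nonneg _) hint).mp hzero
    filter_upwards [this] with ω hω
    have : (q ⬝ᵥ D ω) ^ 2 = 0 := hω
    exact (pow_eq_zero_iff two_ne_zero).mp this
  -- a.e. D ω is orthogonal to the whole kernel
  obtain ⟨t, ht⟩ : (LinearMap.ker S.mulVecLin).FG :=
    IsNoetherian.noetherian (LinearMap.ker S.mulVecLin)
  have hbasis_ae : ∀ᵐ ω ∂μ, ∀ x ∈ (t : Set (Fin n → ℝ)), x ⬝ᵥ D ω = 0 := by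
    rw [ae_ball_iff t.countable_toSet]
    intro x hx
    have hxk : x ∈ LinearMap.ker S.mulVecLin := by
      rw [← ht]; exact Submodule.subset_span hx
    have h2 : S *ᵥ x = 0 := by
      have := LinearMap.mem_ker.mp hxk
      rwa [Matrix.mulVecLin_apply] at this
    exact hker_ae x h2
  have hker_all : ∀ᵐ ω ∂μ, ∀ q : Fin n → ℝ, S *ᵥ q = 0 → q ⬝ᵥ D ω = 0 := by
    filter_upwards [hbasis_ae] with ω hω q hq
    have hqK : q ∈ Submodule.span ℝ (t : Set (Fin n → ℝ)) := by
      rw [ht, LinearMap.mem_ker, Matrix.mulVecLin_apply]; exact hq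
    refine Submodule.span_induction ?_ ?_ ?_ ?_ hqK
    · exact fun x hx => hω x hx
    · simp
    · intro x y _ _ hx hy
      rw [add_dotProduct, hx, hy, add_zero]
    · intro a x _ hx
      rw [smul_dotProduct, hx, smul_zero]
  -- a.e. D ω ∈ row space of P
  have hrowspace : ∀ᵐ ω ∂μ, ∃ c : Fin k → ℝ, Pᵀ *ᵥ c = D ω := by
    filter_upwards [hker_all] with ω hω
    exact hrow (D ω) (aux_mem_range_of_perp_ker S hSsymm (D ω) hω)
  -- pointwise conclusion
  have hΩt : Ωᵀ = Ω := by
    ext i j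
    simpa using congrFun (congrFun hΩ.1 i) j
  filter_upwards [hrowspace] with ω hω f hf hne
  obtain ⟨c, hc⟩ := hω
  obtain ⟨v, hveq⟩ : ∃ v : Fin n → ℝ, v = f - wbar ω := ⟨_, rfl⟩
  have hvne : v ≠ 0 := by rw [hveq]; exact sub_ne_zero.mpr hne
  have hv0 : (P * Ω) *ᵥ v = 0 := by
    rw [hveq, Matrix.mulVec_sub, hf, sub_self]
  have hDfun : wbar ω - ubar ω = -D ω := by ext i; simp [hD]
  have hfu : f - ubar ω = v - D ω := by
    rw [hveq]; ext i; simp [hD]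
  have hcross : v ⬝ᵥ (Ω *ᵥ D ω) = 0 := by
    rw [← hc, Matrix.mulVec_mulVec, Matrix.dotProduct_mulVec, ← Matrix.mulVec_transpose,
      Matrix.transpose_mul, Matrix.transpose_transpose, hΩt, hv0, zero_dotProduct]
  have hcross2 : D ω ⬝ᵥ (Ω *ᵥ v) = 0 := by
    rw [Matrix.dotProduct_mulVec, ← Matrix.mulVec_transpose, hΩt, dotProduct_comm]
    exact hcross
  have hpos : 0 < v ⬝ᵥ (Ω *ᵥ v) := by
    have := hΩ.dotProduct_mulVec_pos hvne
    simpa using this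
  have hLHS : (wbar ω - ubar ω) ⬝ᵥ (Ω *ᵥ (wbar ω - ubar ω)) = D ω ⬝ᵥ (Ω *ᵥ D ω) := by
    rw [hDfun, Matrix.mulVec_neg, neg_dotProduct, dotProduct_neg, neg_neg]
  have hRHS : (f - ubar ω) ⬝ᵥ (Ω *ᵥ (f - ubar ω))
      = v ⬝ᵥ (Ω *ᵥ v) + D ω ⬝ᵥ (Ω *ᵥ D ω) - v ⬝ᵥ (Ω *ᵥ D ω) - D ω ⬝ᵥ (Ω *ᵥ v) := by
    rw [hfu, Matrix.mulVec_sub, dotProduct_sub, sub_dotProduct,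
      sub_dotProduct]
    ring
  rw [hLHS, hRHS, hcross, hcross2]
  linarith
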